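/- For every real β ≥ 1 and positive functions r_1,…,r_n : Z → ℝ (r_i(z) > 0 for all z), one has log E_q[∏_{i=1}^n r_i] ≤ (1/β)·Σ_{i=1}^n log E_q[r_i^β] + (1/β)·log E_q[q^{−n}], where q^{−n}(z) := q(z)^{−n}. (This is the abstract form of the evidence upper bound of Theorem 1, with r_i the per-token likelihood ratios and (1/β)·log E_q[q^{−n}] the constant C(T).) -/

import Mathlib

open Finset Real

/-- `∑ aᵢ^T ≤ (∑ aᵢ)^T` for `T ≥ 1` and positive `aᵢ`. -/
lemma sum_rpow_le_rpow_sum' {Z : Type*} [Fintype Z] [Nonempty Z] (g : Z → ℝ)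
    (hg : ∀ z, 0 < g z) {T : ℝ} (hT : 1 ≤ T) :
    ∑ z, g z ^ T ≤ (∑ z, g z) ^ T := by
  have hS : 0 < ∑ z, g z := Finset.sum_pos (fun z _ => hg z) univ_nonempty
  calc ∑ z, g z ^ T ≤ ∑ z, g z * (∑ z', g z') ^ (T - 1) := by
        refine Finset.sum_le_sum fun z _ => ?_
        have h1 : g z ^ T = g z * g z ^ (T - 1) := by
          nth_rewrite 1 [show T = 1 + (T - 1) by ring]
          rw [Real.rpow_add (hg z), Real.rpow_one]
        rw [h1]
        exact mul_le_mul_of_nonneg_left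
          (Real.rpow_le_rpow (hg z).le
            (Finset.single_le_sum (fun z' _ => (hg z').le) (mem_univ z)) (by linarith))
          (hg z).le
    _ = (∑ z, g z) ^ T := by
        rw [← Finset.sum_mul]
        rw [show T = 1 + (T - 1) by ring, Real.rpow_add hS, Real.rpow_one]
        ring_nf

/-- Generalized Hölder inequality for finite sums, with weights summing to at least 1. -/
lemma holder_gen {ι Z : Type*} [Fintype Z] [Nonempty Z] (s : Finset ι) (w : ι → ℝ)
    (f : ι → Z → ℝ) (hw : ∀ i ∈ s, 0 ≤ w i) (hf : ∀ i ∈ s, ∀ z, 0 < f i z)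
    (hT : 1 ≤ ∑ i ∈ s, w i) :
    ∑ z, ∏ i ∈ s, f i z ^ w i ≤ ∏ i ∈ s, (∑ z, f i z) ^ w i := by
  set T : ℝ := ∑ i ∈ s, w i with hTdef
  have hT0 : 0 < T := lt_of_lt_of_le one_pos hT
  have hS : ∀ i ∈ s, 0 < ∑ z, f i z :=
    fun i hi => Finset.sum_pos (fun z _ => hf i hi z) univ_nonempty
  set g : Z → ℝ := fun z => ∏ i ∈ s, (f i z / (∑ z', f i z')) ^ (w i / T) with hgdef
  have hgpos : ∀ z, 0 < g z := fun z =>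
    Finset.prod_pos fun i hi => Real.rpow_pos_of_pos (div_pos (hf i hi z) (hS i hi)) _
  have hw' : ∑ i ∈ s, w i / T = 1 := by
    rw [← Finset.sum_div]; exact div_self hT0.ne'
  have hAMGM : ∀ z, g z ≤ ∑ i ∈ s, (w i / T) * (f i z / (∑ z', f i z')) := fun z =>
    Real.geom_mean_le_arith_mean_weighted s _ _
      (fun i hi => div_nonneg (hw i hi) hT0.le) hw'
      (fun i hi => (div_pos (hf i hi z) (hS i hi)).le)
  have hgsum : ∑ z, g z ≤ 1 := by
    calc ∑ z, g z ≤ ∑ z, ∑ i ∈ s, (w i / T) * (f i z / (∑ z', f i z')) :=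
          Finset.sum_le_sum fun z _ => hAMGM z
      _ = ∑ i ∈ s, (w i / T) * ((∑ z, f i z) / (∑ z', f i z')) := by
          rw [Finset.sum_comm]
          exact Finset.sum_congr rfl fun i _ => by
            rw [← Finset.mul_sum, ← Finset.sum_div]
      _ = 1 := by
          rw [← hw']
          exact Finset.sum_congr rfl fun i hi => by
            rw [div_self (hS i hi).ne', mul_one]
  have key : ∑ z, g z ^ T ≤ 1 := by
    calc ∑ z, g z ^ T ≤ (∑ z, g z) ^ T := sum_rpow_le_rpow_sum' g hgpos hT
      _ ≤ 1 := Real.rpow_le_one (Finset.sum_nonneg fun z _ => (hgpos z).le) hgsum hT0.le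
  have hgT : ∀ z, g z ^ T = (∏ i ∈ s, f i z ^ w i) / ∏ i ∈ s, (∑ z', f i z') ^ w i := by
    intro z
    have h1 : g z ^ T = ∏ i ∈ s, (f i z / (∑ z', f i z')) ^ w i := by
      rw [hgdef, ← Real.finset_prod_rpow s _
        (fun i hi => Real.rpow_nonneg (div_nonneg (hf i hi z).le (hS i hi).le) _) T]
      exact Finset.prod_congr rfl fun i hi => by
        rw [← Real.rpow_mul (div_nonneg (hf i hi z).le (hS i hi).le),
          div_mul_cancel₀ _ hT0.ne']
    rw [h1, ← Finset.prod_div_distrib]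
    exact Finset.prod_congr rfl fun i hi =>
      Real.div_rpow (hf i hi z).le (hS i hi).le (w i)
  have hP : 0 < ∏ i ∈ s, (∑ z', f i z') ^ w i :=
    Finset.prod_pos fun i hi => Real.rpow_pos_of_pos (hS i hi) _
  rw [← div_le_one hP, Finset.sum_div]
  calc ∑ z, (∏ i ∈ s, f i z ^ w i) / ∏ i ∈ s, (∑ z', f i z') ^ w i
      = ∑ z, g z ^ T := by exact Finset.sum_congr rfl fun z _ => (hgT z).symm
    _ ≤ 1 := key


/-- **Abstract evidence upper bound (Theorem 1, abstract form).**
For a strictly positive pmf `q` on a nonempty finite type `Z`, every `β ≥ 1`, and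
positive functions `r 1, …, r n`, the log of the expected product is bounded by the
sum of the `β`-Rényi terms plus the constant `(1/β)·log E_q[q⁻ⁿ]`. -/
theorem abstract_evidence_upper_bound {Z : Type*} [Fintype Z] [Nonempty Z]
    (q : Z → ℝ) (hq_nonneg : ∀ z, 0 ≤ q z) (hq_pos : ∀ z, 0 < q z)
    (hq_sum : ∑ z, q z = 1)
    {n : ℕ} (hn : 1 ≤ n) (r : Fin n → Z → ℝ) (hr : ∀ i z, 0 < r i z)
    {β : ℝ} (hβ : 1 ≤ β) :
    Real.log (∑ z, q z * ∏ i, r i z) ≤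
      (1 / β) * ∑ i, Real.log (∑ z, q z * r i z ^ β)
        + (1 / β) * Real.log (∑ z, q z * q z ^ (-(n : ℝ))) := by
  have hβ0 : 0 < β := lt_of_lt_of_le one_pos hβ
  set F : Fin n ⊕ Bool → Z → ℝ :=
    Sum.elim (fun i z => q z * r i z ^ β)
      (fun b z => if b then q z else q z * q z ^ (-(n : ℝ))) with hF
  set W : Fin n ⊕ Bool → ℝ :=
    Sum.elim (fun _ => 1 / β) (fun b => if b then 1 - 1 / β else 1 / β) with hW
  have hWnn : ∀ i ∈ (Finset.univ : Finset (Fin n ⊕ Bool)), 0 ≤ W i := by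
    have h1β : 1 / β ≤ 1 := by rw [div_le_one hβ0]; exact hβ
    have h0β : (0:ℝ) ≤ 1 / β := by positivity
    rw [one_div] at h1β h0β
    rintro (i | b) _
    · simp only [hW, Sum.elim_inl]
      positivity
    · rcases b with _ | _ <;> simp [hW] <;> linarith
  have hFpos : ∀ i ∈ (Finset.univ : Finset (Fin n ⊕ Bool)), ∀ z, 0 < F i z := by
    rintro (i | b) _ z
    · simp only [hF, Sum.elim_inl]
      exact mul_pos (hq_pos z) (Real.rpow_pos_of_pos (hr i z) β)
    · rcases b with _ | _ <;> simp [hF]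
      · exact mul_pos (hq_pos z) (inv_pos.mpr (pow_pos (hq_pos z) n))
      · exact hq_pos z
  have hWsum : 1 ≤ ∑ i : Fin n ⊕ Bool, W i := by
    rw [Fintype.sum_sum_type, Fintype.sum_bool]
    simp only [hW, Sum.elim_inl, Sum.elim_inr, Finset.sum_const, Finset.card_univ,
      Fintype.card_fin, smul_eq_mul, nsmul_eq_mul, if_true, if_false, Bool.false_eq_true]
    have : (0:ℝ) ≤ (n : ℝ) * (1/β) := by positivity
    linarith
  have hzeq : ∀ z, ∏ i : Fin n ⊕ Bool, F i z ^ W i = q z * ∏ i, r i z := by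
    intro z
    rw [Fintype.prod_sum_type]
    have h1 : ∀ i : Fin n, F (Sum.inl i) z ^ W (Sum.inl i)
        = q z ^ (1/β) * r i z := by
      intro i
      simp only [hF, hW, Sum.elim_inl]
      rw [Real.mul_rpow (hq_nonneg z) (Real.rpow_nonneg (hr i z).le β),
        ← Real.rpow_mul (hr i z).le, mul_one_div, div_self hβ0.ne', Real.rpow_one]
    have h2 : ∏ i : Fin n, F (Sum.inl i) z ^ W (Sum.inl i)
        = q z ^ ((n : ℝ) * (1/β)) * ∏ i, r i z := by
      rw [Finset.prod_congr rfl fun i _ => h1 i, Finset.prod_mul_distrib,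
        Finset.prod_const, Finset.card_univ, Fintype.card_fin,
        ← Real.rpow_natCast (q z ^ (1/β)) n, ← Real.rpow_mul (hq_nonneg z), mul_comm (1/β)]
    have h3 : ∏ b : Bool, F (Sum.inr b) z ^ W (Sum.inr b)
        = q z ^ (1 - 1/β) * q z ^ ((1 - (n:ℝ)) * (1/β)) := by
      rw [Fintype.prod_bool]
      simp only [hF, hW, Sum.elim_inr, if_true, if_false, Bool.false_eq_true]
      congr 1
      nth_rewrite 1 [show q z = q z ^ (1:ℝ) from (Real.rpow_one _).symm]
      rw [← Real.rpow_add (hq_pos z), ← Real.rpow_mul (hq_nonneg z)]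
      congr 1
    rw [h2, h3]
    have hE : (n : ℝ) * (1/β) + ((1 - 1/β) + (1 - (n:ℝ)) * (1/β)) = 1 := by
      field_simp
      ring
    calc q z ^ ((n : ℝ) * (1/β)) * (∏ i, r i z)
          * (q z ^ (1 - 1/β) * q z ^ ((1 - (n:ℝ)) * (1/β)))
        = q z ^ ((n : ℝ) * (1/β)) * (q z ^ (1 - 1/β) * q z ^ ((1 - (n:ℝ)) * (1/β)))
          * ∏ i, r i z := by ring
      _ = q z * ∏ i, r i z := by
          rw [← Real.rpow_add (hq_pos z), ← Real.rpow_add (hq_pos z), hE, Real.rpow_one]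
  have hHolder := holder_gen (Finset.univ : Finset (Fin n ⊕ Bool)) W F hWnn hFpos hWsum
  rw [Finset.sum_congr rfl fun z _ => hzeq z] at hHolder
  have hRHS : ∏ i : Fin n ⊕ Bool, (∑ z, F i z) ^ W i
      = (∏ i : Fin n, (∑ z, q z * r i z ^ β) ^ (1/β))
        * (∑ z, q z * q z ^ (-(n : ℝ))) ^ (1/β) := by
    rw [Fintype.prod_sum_type, Fintype.prod_bool]
    simp only [hF, hW, Sum.elim_inl, Sum.elim_inr, if_true, if_false, Bool.false_eq_true]
    rw [hq_sum, Real.one_rpow, one_mul]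
  rw [hRHS] at hHolder
  have hA : ∀ i : Fin n, 0 < ∑ z, q z * r i z ^ β := fun i =>
    Finset.sum_pos (fun z _ => mul_pos (hq_pos z) (Real.rpow_pos_of_pos (hr i z) β))
      Finset.univ_nonempty
  have hB : 0 < ∑ z, q z * q z ^ (-(n : ℝ)) :=
    Finset.sum_pos (fun z _ => mul_pos (hq_pos z) (Real.rpow_pos_of_pos (hq_pos z) _))
      Finset.univ_nonempty
  have hL : 0 < ∑ z, q z * ∏ i, r i z :=
    Finset.sum_pos (fun z _ => mul_pos (hq_pos z)
      (Finset.prod_pos fun i _ => hr i z)) Finset.univ_nonempty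
  calc Real.log (∑ z, q z * ∏ i, r i z)
      ≤ Real.log ((∏ i : Fin n, (∑ z, q z * r i z ^ β) ^ (1/β))
          * (∑ z, q z * q z ^ (-(n : ℝ))) ^ (1/β)) := Real.log_le_log hL hHolder
    _ = (1 / β) * ∑ i, Real.log (∑ z, q z * r i z ^ β)
        + (1 / β) * Real.log (∑ z, q z * q z ^ (-(n : ℝ))) := by
        rw [Real.log_mul (Finset.prod_ne_zero_iff.2 fun i _ =>
            (Real.rpow_pos_of_pos (hA i) _).ne')
            (Real.rpow_pos_of_pos hB _).ne',
          Real.log_prod (fun i _ => (Real.rpow_pos_of_pos (hA i) _).ne'),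
          Real.log_rpow hB]
        congr 1
        rw [Finset.mul_sum]
        exact Finset.sum_congr rfl fun i _ => Real.log_rpow (hA i) _
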